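/- Let a = −1, b = 1, c = 0, and for each ε > 0 define k1, k2, N accordingly. Then k2 = −k1 and N = 2k2 + 1. Moreover, if a sequence ε → 0+ admits expansion data (a1,a2,b1,b2,c1,c2), then b1 = a1 ∈ [0,1], b2 = a2, c1 = a1/2 − 1/4, c2 = a1²/2 − a1/2 + a2/2 + 1/8, and furthermore a2 ≤ 0 if a1 = 1 and a2 ≥ 0 if a1 = 0. -/

import Mathlib

open Filter Asymptotics Set

noncomputable def kk1 (a c ε : ℝ) : ℤ := ⌈a / ε - c⌉
noncomputable def kk2 (b c ε : ℝ) : ℤ := ⌊b / ε - c⌋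
noncomputable def NN (a b c ε : ℝ) : ℤ := kk2 b c ε - kk1 a c ε + 1

def AdmitsExpansion (a b c : ℝ) (ε : ℕ → ℝ) (a1 a2 b1 b2 c1 c2 : ℝ) : Prop :=
  (∀ n, 0 < ε n) ∧ Tendsto ε atTop (nhds 0) ∧
  (fun n => ε n * (c + (kk1 a c (ε n) : ℝ)) - a - (a1 * ε n + a2 * ε n ^ 2))
    =o[atTop] (fun n => ε n ^ 2) ∧
  (fun n => b - ε n * (c + (kk2 b c (ε n) : ℝ)) - (b1 * ε n + b2 * ε n ^ 2))
    =o[atTop] (fun n => ε n ^ 2) ∧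
  (fun n => 1 / ((NN a b c (ε n) : ℝ) * ε n) - (1 / (b - a) + c1 * ε n + c2 * ε n ^ 2))
    =o[atTop] (fun n => ε n ^ 2)

/-- If `(p·e + q·e²)/e² → 0` along a null positive sequence, both coefficients vanish. -/
lemma coef_zero (e : ℕ → ℝ) (he : Tendsto e atTop (nhds 0)) (hne : ∀ n, e n ≠ 0)
    (p q : ℝ) (h : Tendsto (fun n => (p * e n + q * e n ^ 2) / e n ^ 2) atTop (nhds 0)) :
    p = 0 ∧ q = 0 := by
  have hp : Tendsto (fun n => p + q * e n) atTop (nhds 0) := by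
    have h2 := h.mul he
    rw [zero_mul] at h2
    refine h2.congr fun n => ?_
    field_simp [hne n]
  have hp2 : Tendsto (fun n => p + q * e n) atTop (nhds (p + q * 0)) :=
    tendsto_const_nhds.add (he.const_mul q)
  rw [mul_zero, add_zero] at hp2
  have hpe : p = 0 := tendsto_nhds_unique hp2 hp
  subst hpe
  refine ⟨rfl, ?_⟩
  have hq : Tendsto (fun _ : ℕ => q) atTop (nhds 0) := by
    refine h.congr fun n => ?_
    rw [zero_mul, zero_add, mul_div_assoc, div_self (pow_ne_zero 2 (hne n)), mul_one]
  exact tendsto_nhds_unique tendsto_const_nhds hq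

/-- the case `a = −1`, `b = 1`, `c = 0`. -/
theorem stmt2 :
    (∀ ε : ℝ, 0 < ε →
      kk2 1 0 ε = -kk1 (-1) 0 ε ∧ NN (-1) 1 0 ε = 2 * kk2 1 0 ε + 1) ∧
    (∀ (ε : ℕ → ℝ) (a1 a2 b1 b2 c1 c2 : ℝ),
      AdmitsExpansion (-1) 1 0 ε a1 a2 b1 b2 c1 c2 →
      b1 = a1 ∧ a1 ∈ Set.Icc (0:ℝ) 1 ∧ b2 = a2 ∧
      c1 = a1 / 2 - 1 / 4 ∧ c2 = a1 ^ 2 / 2 - a1 / 2 + a2 / 2 + 1 / 8 ∧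
      (a1 = 1 → a2 ≤ 0) ∧ (a1 = 0 → 0 ≤ a2)) := by
  have key1 : ∀ ε : ℝ, kk1 (-1) 0 ε = -⌊1 / ε⌋ := by
    intro ε
    unfold kk1
    rw [sub_zero, neg_div, Int.ceil_neg]
  have key2 : ∀ ε : ℝ, kk2 1 0 ε = ⌊1 / ε⌋ := by
    intro ε
    unfold kk2
    rw [sub_zero]
  have keyN : ∀ ε : ℝ, NN (-1) 1 0 ε = 2 * ⌊1 / ε⌋ + 1 := by
    intro ε
    unfold NN
    rw [key1, key2]
    ring
  constructor
  · intro ε hε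
    refine ⟨by rw [key1, key2, neg_neg], by rw [keyN, key2]⟩
  rintro ε a1 a2 b1 b2 c1 c2 ⟨hpos, he, h1, h2, h3⟩
  have hne : ∀ n, ε n ≠ 0 := fun n => (hpos n).ne'
  have hne2 : ∀ n, ε n ^ 2 ≠ 0 := fun n => pow_ne_zero _ (hne n)
  have hcond : ∀ᶠ n in atTop, (ε n ^ 2 = 0 → True) := by filter_upwards with n; exact fun _ => trivial
  set F : ℕ → ℝ := fun n => 1 - ε n * (⌊1 / ε n⌋ : ℝ) with hFdef
  -- little-o hypotheses as tendsto statements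
  have t1 : Tendsto (fun n => (F n - (a1 * ε n + a2 * ε n ^ 2)) / ε n ^ 2) atTop (nhds 0) := by
    rw [← isLittleO_iff_tendsto' (by filter_upwards with n h; exact absurd h (hne2 n))]
    refine h1.congr (fun n => ?_) (fun n => rfl)
    rw [key1]
    simp only [hFdef]
    push_cast
    ring
  have t2 : Tendsto (fun n => (F n - (b1 * ε n + b2 * ε n ^ 2)) / ε n ^ 2) atTop (nhds 0) := by
    rw [← isLittleO_iff_tendsto' (by filter_upwards with n h; exact absurd h (hne2 n))]
    refine h2.congr (fun n => ?_) (fun n => rfl)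
    rw [key2]
    simp only [hFdef]
    ring
  have t3 : Tendsto (fun n =>
      (1 / ((2 * (⌊1 / ε n⌋ : ℝ) + 1) * ε n) - (1 / 2 + c1 * ε n + c2 * ε n ^ 2)) / ε n ^ 2)
      atTop (nhds 0) := by
    rw [← isLittleO_iff_tendsto' (by filter_upwards with n h; exact absurd h (hne2 n))]
    refine h3.congr (fun n => ?_) (fun n => rfl)
    rw [keyN]
    norm_num
  -- fractional part facts
  have hfr : ∀ n, F n / ε n = Int.fract (1 / ε n) := by
    intro n
    simp only [hFdef]
    rw [← Int.self_sub_floor]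
    field_simp [hne n]
  have hf0 : ∀ n, 0 ≤ F n / ε n := fun n => (hfr n) ▸ Int.fract_nonneg _
  have hf1 : ∀ n, F n / ε n < 1 := fun n => (hfr n) ▸ Int.fract_lt_one _
  have hFnonneg : ∀ n, 0 ≤ F n := by
    intro n
    have h := mul_nonneg (hf0 n) (hpos n).le
    rwa [div_mul_cancel₀ _ (hne n)] at h
  have hFlt : ∀ n, F n < ε n := fun n => (div_lt_one (hpos n)).mp (hf1 n)
  -- limit of F n / ε n is a1
  have hfl : Tendsto (fun n => F n / ε n) atTop (nhds a1) := by
    have hlim : Tendsto (fun n =>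
        ((F n - (a1 * ε n + a2 * ε n ^ 2)) / ε n ^ 2) * ε n + (a1 + a2 * ε n))
        atTop (nhds (0 * 0 + (a1 + a2 * 0))) :=
      (t1.mul he).add (tendsto_const_nhds.add (he.const_mul a2))
    rw [zero_mul, mul_zero, zero_add, add_zero] at hlim
    refine hlim.congr fun n => ?_
    field_simp [hne n]
    ring
  have ha1mem : a1 ∈ Set.Icc (0:ℝ) 1 :=
    ⟨ge_of_tendsto' hfl hf0, le_of_tendsto' hfl fun n => (hf1 n).le⟩
  -- b1 = a1 and b2 = a2
  have hsub : Tendsto (fun n => ((b1 - a1) * ε n + (b2 - a2) * ε n ^ 2) / ε n ^ 2)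
      atTop (nhds 0) := by
    have h := t1.sub t2
    rw [sub_zero] at h
    refine h.congr fun n => ?_
    rw [div_sub_div_same]
    congr 1
    ring
  obtain ⟨hb1, hb2⟩ := coef_zero ε he hne _ _ hsub
  have hb1' : b1 = a1 := by linarith
  have hb2' : b2 = a2 := by linarith
  -- the true second-order expansion of 1/(Nε)
  set c1' : ℝ := a1 / 2 - 1 / 4 with hc1'
  set c2' : ℝ := a1 ^ 2 / 2 - a1 / 2 + a2 / 2 + 1 / 8 with hc2'
  have key : ∀ e d τ : ℝ, e ≠ 0 → d ≠ 0 →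
      d = 2 + (1 - 2 * a1) * e - 2 * a2 * e ^ 2 - 2 * τ * e ^ 2 →
      (1 / d - (1 / 2 + c1' * e + c2' * e ^ 2)) / e ^ 2 =
        (τ * (1 + 2 * c1' * e + 2 * c2' * e ^ 2) +
          e * ((2 * c1' * a2 - c2' * (1 - 2 * a1)) + 2 * c2' * a2 * e)) / d := by
    intro e d τ he0 hd0 hdd
    rw [hc1', hc2'] at *
    field_simp
    rw [hdd]
    ring
  have hDval : ∀ n, (2 * (⌊1 / ε n⌋ : ℝ) + 1) * ε n =
      2 + (1 - 2 * a1) * ε n - 2 * a2 * ε n ^ 2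
        - 2 * ((F n - (a1 * ε n + a2 * ε n ^ 2)) / ε n ^ 2) * ε n ^ 2 := by
    intro n
    simp only [hFdef]
    field_simp [hne n]
    ring
  have hDne : ∀ n, (2 * (⌊1 / ε n⌋ : ℝ) + 1) * ε n ≠ 0 := by
    intro n
    refine mul_ne_zero ?_ (hne n)
    have : ((2 * ⌊1 / ε n⌋ + 1 : ℤ) : ℝ) ≠ 0 := by
      rw [Int.cast_ne_zero]
      omega
    push_cast at this
    convert this using 2
  have texp : Tendsto (fun n =>
      (1 / ((2 * (⌊1 / ε n⌋ : ℝ) + 1) * ε n) - (1 / 2 + c1' * ε n + c2' * ε n ^ 2)) / ε n ^ 2)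
      atTop (nhds 0) := by
    have hDlim : Tendsto (fun n => (2 * (⌊1 / ε n⌋ : ℝ) + 1) * ε n) atTop (nhds 2) := by
      have h := tendsto_const_nhds (x := (2:ℝ)) (f := atTop (α := ℕ)) |>.add
        (((he.const_mul (1 - 2 * a1)).sub ((he.pow 2).const_mul (2 * a2))).sub
          ((t1.mul (he.pow 2)).const_mul 2))
      have h2 : Tendsto (fun n => (2 * (⌊1 / ε n⌋ : ℝ) + 1) * ε n) atTop
          (nhds (2 + ((1 - 2 * a1) * 0 - 2 * a2 * 0 ^ 2 - 2 * ((0:ℝ) * 0 ^ 2)))) := by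
        refine h.congr fun n => ?_
        rw [hDval n]
        ring
      rw [show (2:ℝ) + ((1 - 2 * a1) * 0 - 2 * a2 * 0 ^ 2 - 2 * ((0:ℝ) * 0 ^ 2)) = 2 by
        norm_num] at h2
      exact h2
    have hA : Tendsto (fun n =>
        ((F n - (a1 * ε n + a2 * ε n ^ 2)) / ε n ^ 2) *
          (1 + 2 * c1' * ε n + 2 * c2' * ε n ^ 2)) atTop (nhds 0) := by
      have h1' : Tendsto (fun n => (1:ℝ) + 2 * c1' * ε n + 2 * c2' * ε n ^ 2) atTop
          (nhds (1 + 2 * c1' * 0 + 2 * c2' * 0 ^ 2)) :=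
        (tendsto_const_nhds.add (he.const_mul (2 * c1'))).add ((he.pow 2).const_mul (2 * c2'))
      have h1'' := t1.mul h1'
      rw [zero_mul] at h1''
      exact h1''
    have hB : Tendsto (fun n =>
        ε n * ((2 * c1' * a2 - c2' * (1 - 2 * a1)) + 2 * c2' * a2 * ε n)) atTop (nhds 0) := by
      have h2' : Tendsto (fun n => (2 * c1' * a2 - c2' * (1 - 2 * a1)) + 2 * c2' * a2 * ε n)
          atTop (nhds ((2 * c1' * a2 - c2' * (1 - 2 * a1)) + 2 * c2' * a2 * 0)) :=
        tendsto_const_nhds.add (he.const_mul (2 * c2' * a2))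
      have h2'' := he.mul h2'
      rw [zero_mul] at h2''
      exact h2''
    have hnum := hA.add hB
    rw [add_zero] at hnum
    have h := hnum.div hDlim (by norm_num)
    rw [zero_div] at h
    refine h.congr fun n => ?_
    exact (key (ε n) _ _ (hne n) (hDne n) (hDval n)).symm
  have hsub2 : Tendsto (fun n => ((c1' - c1) * ε n + (c2' - c2) * ε n ^ 2) / ε n ^ 2)
      atTop (nhds 0) := by
    have h := t3.sub texp
    rw [sub_zero] at h
    refine h.congr fun n => ?_
    rw [div_sub_div_same]
    congr 1
    ring
  obtain ⟨hc1, hc2⟩ := coef_zero ε he hne _ _ hsub2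
  refine ⟨hb1', ha1mem, hb2', by linarith, by linarith, ?_, ?_⟩
  · -- a1 = 1 → a2 ≤ 0
    intro ha1
    subst ha1
    have hb : ∀ n, (F n - (1 * ε n + a2 * ε n ^ 2)) / ε n ^ 2 + a2 ≤ 0 := by
      intro n
      have heq : (F n - (1 * ε n + a2 * ε n ^ 2)) / ε n ^ 2 + a2 = (F n - ε n) / ε n ^ 2 := by
        field_simp [hne n]
        ring
      rw [heq]
      exact div_nonpos_of_nonpos_of_nonneg (by linarith [hFlt n]) (sq_nonneg _)
    have hlim : Tendsto (fun n => (F n - (1 * ε n + a2 * ε n ^ 2)) / ε n ^ 2 + a2)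
        atTop (nhds (0 + a2)) := t1.add tendsto_const_nhds
    have := le_of_tendsto' hlim hb
    linarith
  · -- a1 = 0 → 0 ≤ a2
    intro ha1
    subst ha1
    have hb : ∀ n, 0 ≤ (F n - (0 * ε n + a2 * ε n ^ 2)) / ε n ^ 2 + a2 := by
      intro n
      have heq : (F n - (0 * ε n + a2 * ε n ^ 2)) / ε n ^ 2 + a2 = F n / ε n ^ 2 := by
        field_simp [hne n]
        ring
      rw [heq]
      exact div_nonneg (hFnonneg n) (sq_nonneg _)
    have hlim : Tendsto (fun n => (F n - (0 * ε n + a2 * ε n ^ 2)) / ε n ^ 2 + a2)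
        atTop (nhds (0 + a2)) := t1.add tendsto_const_nhds
    have := ge_of_tendsto' hlim hb
    linarith
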